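/- arXiv:1101.4286 — 3 statements merged into one kernel-verified Lean document; each statement's English description precedes it below -/
import Mathlib

section
/- Let A be a finite abelian group, H a finite group acting on A by automorphisms, and G = A ⋊ H the corresponding semidirect product. Let w be an element of the free group on n generators. If the number of n-tuples from H satisfying w = 1 is at least |H|^(n-1), then the number of n-tuples from G satisfying w = 1 is at least |G|^(n-1). -/
section Aux

variable {A H : Type*} [CommGroup A] [Group H] {φ : H →* MulAut A} {n : ℕ}

private lemma right_lift (g : Fin n → A ⋊[φ] H) (w : FreeGroup (Fin n)) :
    (FreeGroup.lift g w).right = FreeGroup.lift (fun i => (g i).right) w :=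
  DFunLike.congr_fun (FreeGroup.ext_hom (SemidirectProduct.rightHom.comp (FreeGroup.lift g))
    (FreeGroup.lift (fun i => (g i).right))
    (by intro a; simp [SemidirectProduct.rightHom])) w

private lemma left_lift_mul (h : Fin n → H) (w : FreeGroup (Fin n)) (a b : Fin n → A) :
    (FreeGroup.lift (fun i => (⟨a i * b i, h i⟩ : A ⋊[φ] H)) w).left =
      (FreeGroup.lift (fun i => (⟨a i, h i⟩ : A ⋊[φ] H)) w).left *
      (FreeGroup.lift (fun i => (⟨b i, h i⟩ : A ⋊[φ] H)) w).left := by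
  have hp : ∀ (f : Fin n → A ⋊[φ] H) (x : Fin n), FreeGroup.lift f (FreeGroup.of x) = f x :=
    fun f x => FreeGroup.lift_apply_of
  induction w using FreeGroup.induction_on with
  | C1 => simp
  | of x => simp only [hp]
  | inv_of x _ =>
      simp only [map_inv, hp, SemidirectProduct.inv_left, SemidirectProduct.inv_right,
        mul_inv, map_mul]
  | mul u v hu hv =>
      have h1 := right_lift (φ := φ) (fun i => (⟨a i * b i, h i⟩ : A ⋊[φ] H)) u
      have h2 := right_lift (φ := φ) (fun i => (⟨a i, h i⟩ : A ⋊[φ] H)) u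
      have h3 := right_lift (φ := φ) (fun i => (⟨b i, h i⟩ : A ⋊[φ] H)) u
      simp only [map_mul, SemidirectProduct.mul_left, h1, h2, h3, hu, hv, map_mul]
      simp [mul_mul_mul_comm]


/-- For fixed right components `h`, the left component of `w` evaluated at `(a i, h i)`
is a homomorphism in `a`, since `A` is abelian. -/
private def leftHomOf (φ : H →* MulAut A) (h : Fin n → H) (w : FreeGroup (Fin n)) :
    (Fin n → A) →* A :=
  MonoidHom.mk' (fun a => (FreeGroup.lift (fun i => (⟨a i, h i⟩ : A ⋊[φ] H)) w).left)
    (fun a b => left_lift_mul h w a b)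

private lemma fiber_card_ge [Finite A] (h : Fin n → H) (w : FreeGroup (Fin n)) :
    Nat.card {a : Fin n → A // leftHomOf φ h w a = 1} ≥ Nat.card A ^ (n - 1) := by
  set f := leftHomOf φ h w
  have hker : Nat.card {a : Fin n → A // f a = 1} = Nat.card f.ker :=
    Nat.card_congr (Equiv.subtypeEquivRight (fun a => Iff.symm MonoidHom.mem_ker))
  rcases Nat.eq_zero_or_pos n with hn | hn
  · subst hn
    rw [hker]
    simp only [ge_iff_le, Nat.zero_sub, pow_zero]
    have : Nonempty f.ker := ⟨1⟩
    exact Nat.one_le_iff_ne_zero.2 Nat.card_pos.ne'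
  · have hmul : Nat.card f.ker * f.ker.index = Nat.card (Fin n → A) :=
      Subgroup.card_mul_index f.ker
    rw [Subgroup.index_ker] at hmul
    have hrange : Nat.card f.range ≤ Nat.card A :=
      Nat.card_le_card_of_injective _ Subtype.val_injective
    have hcard : Nat.card (Fin n → A) = Nat.card A ^ n := by
      rw [Nat.card_fun, Nat.card_eq_fintype_card (α := Fin n), Fintype.card_fin]
    have hA : 0 < Nat.card A := Nat.card_pos
    have key : Nat.card A ^ (n - 1) * Nat.card A ≤ Nat.card f.ker * Nat.card A := by
      calc Nat.card A ^ (n - 1) * Nat.card A = Nat.card A ^ n := by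
            rw [← pow_succ, Nat.sub_add_cancel hn]
        _ = Nat.card f.ker * Nat.card f.range := by rw [← hcard]; exact hmul.symm
        _ ≤ Nat.card f.ker * Nat.card A := Nat.mul_le_mul_left _ hrange
    rw [hker]
    exact Nat.le_of_mul_le_mul_right key hA

/-- Tuples in the semidirect product satisfying `w = 1` correspond to pairs of an `H`-tuple
satisfying `w = 1` together with an `A`-tuple in the kernel of the associated hom. -/
private def mainEquiv (φ : H →* MulAut A) (w : FreeGroup (Fin n)) :
    {g : Fin n → A ⋊[φ] H // FreeGroup.lift g w = 1} ≃
      Σ h : {h : Fin n → H // FreeGroup.lift h w = 1},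
        {a : Fin n → A // leftHomOf φ h.1 w a = 1} where
  toFun g := ⟨⟨fun i => (g.1 i).right, by
      rw [← right_lift, g.2, SemidirectProduct.one_right]⟩,
    ⟨fun i => (g.1 i).left, by
      show (FreeGroup.lift (fun i => (⟨(g.1 i).left, (g.1 i).right⟩ : A ⋊[φ] H)) w).left = 1
      have : (fun i => (⟨(g.1 i).left, (g.1 i).right⟩ : A ⋊[φ] H)) = g.1 := by
        funext i; rfl
      rw [this, g.2, SemidirectProduct.one_left]⟩⟩
  invFun p := ⟨fun i => ⟨p.2.1 i, p.1.1 i⟩, by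
    apply SemidirectProduct.ext
    · exact p.2.2
    · rw [right_lift]; exact p.1.2⟩
  left_inv g := by
    apply Subtype.ext; funext i; rfl
  right_inv p := by
    rcases p with ⟨⟨h, hh⟩, ⟨a, ha⟩⟩; rfl

private def prodEquiv (φ : H →* MulAut A) : (A ⋊[φ] H) ≃ A × H :=
  ⟨fun g => (g.left, g.right), fun p => ⟨p.1, p.2⟩, fun _ => rfl, fun _ => rfl⟩

end Aux

/-- If `A` is a finite abelian group, `H` a finite group acting on `A`
by automorphisms via `φ`, and `G = A ⋊[φ] H`, and if the number of `n`-tuples from `H`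
satisfying the word `w = 1` is at least `|H|^(n-1)`, then the number of `n`-tuples
from `G` satisfying `w = 1` is at least `|G|^(n-1)`. -/
theorem semidirect_word_count {A H : Type*} [CommGroup A] [Group H]
    [Finite A] [Finite H] (φ : H →* MulAut A)
    (n : ℕ) (w : FreeGroup (Fin n))
    (hH : Nat.card {h : Fin n → H // (FreeGroup.lift h) w = 1} ≥ Nat.card H ^ (n - 1)) :
    Nat.card {g : Fin n → A ⋊[φ] H // (FreeGroup.lift g) w = 1}
      ≥ Nat.card (A ⋊[φ] H) ^ (n - 1) := by
  classical
  have hG : Nat.card (A ⋊[φ] H) = Nat.card A * Nat.card H := by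
    rw [Nat.card_congr (prodEquiv φ), Nat.card_prod]
  haveI : Finite (A ⋊[φ] H) := Finite.of_equiv _ (prodEquiv φ).symm
  haveI : Fintype {h : Fin n → H // (FreeGroup.lift h) w = 1} := Fintype.ofFinite _
  haveI : ∀ h : {h : Fin n → H // (FreeGroup.lift h) w = 1},
      Fintype {a : Fin n → A // leftHomOf φ h.1 w a = 1} := fun h => Fintype.ofFinite _
  rw [Nat.card_congr (mainEquiv φ w)]
  rw [Nat.card_eq_fintype_card, Fintype.card_sigma]
  rw [hG, mul_pow]
  calc Nat.card A ^ (n-1) * Nat.card H ^ (n-1)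
      ≤ Nat.card A ^ (n-1) * Nat.card {h : Fin n → H // (FreeGroup.lift h) w = 1} :=
        Nat.mul_le_mul_left _ hH
    _ = ∑ _h : {h : Fin n → H // (FreeGroup.lift h) w = 1}, Nat.card A ^ (n-1) := by
        rw [Finset.sum_const, Finset.card_univ, ← Nat.card_eq_fintype_card, smul_eq_mul,
          mul_comm]
    _ ≤ ∑ h : {h : Fin n → H // (FreeGroup.lift h) w = 1},
          Fintype.card {a : Fin n → A // leftHomOf φ h.1 w a = 1} := by
        apply Finset.sum_le_sum
        intro h _
        rw [← Nat.card_eq_fintype_card]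
        exact fiber_card_ge h.1 w
  -- conclude: goal is `Nat.card G ^ (n-1) ≤ ∑ ...` ; rewrite card G
end

section
/- Let G be a finite abelian group and w an element of the free group on n generators. Then the number of n-tuples (g_1,...,g_n) in G^n satisfying w(g_1,...,g_n) = 1 is at least |G|^(n-1). -/
private lemma eval_lift_comm {G : Type*} [CommGroup G] {n : ℕ}
    (w : FreeGroup (Fin n)) (g : Fin n → G) :
    (FreeGroup.lift (fun i => Pi.evalMonoidHom (fun _ : Fin n => G) i) w) g
      = FreeGroup.lift g w := by
  induction w using FreeGroup.induction_on with
  | C1 => simp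
  | of i =>
      rw [FreeGroup.lift_apply_of, FreeGroup.lift_apply_of, Pi.evalMonoidHom_apply]
  | inv_of i ih => simp [ih]
  | mul x y hx hy => simp [hx, hy]

/-- For a finite abelian group `G` and a word `w` in the free group on
`n` generators, the number of `n`-tuples satisfying `w = 1` is at least `|G|^(n-1)`. -/
theorem abelian_word_count {G : Type*} [CommGroup G] [Finite G]
    (n : ℕ) (w : FreeGroup (Fin n)) :
    Nat.card {g : Fin n → G // (FreeGroup.lift g) w = 1} ≥ Nat.card G ^ (n - 1) := by
  set φ : (Fin n → G) →* G :=
    FreeGroup.lift (fun i => Pi.evalMonoidHom (fun _ : Fin n => G) i) w with hφ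
  have hcard : Nat.card {g : Fin n → G // (FreeGroup.lift g) w = 1}
      = Nat.card φ.ker := by
    apply Nat.card_congr
    exact Equiv.subtypeEquivRight (fun g => by
      simp [MonoidHom.mem_ker, hφ, eval_lift_comm])
  rw [hcard]
  rcases Nat.eq_zero_or_pos n with rfl | hn
  · simp
    exact Nat.one_le_iff_ne_zero.mpr (Nat.card_ne_zero.mpr ⟨⟨1, φ.ker.one_mem⟩, inferInstance⟩)
  · have htot : Nat.card (Fin n → G)
        = Nat.card ((Fin n → G) ⧸ φ.ker) * Nat.card φ.ker :=
      Subgroup.card_eq_card_quotient_mul_card_subgroup φ.ker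
    have hfun : Nat.card (Fin n → G) = Nat.card G ^ n := by
      simp [Nat.card_fun]
    have hq : Nat.card ((Fin n → G) ⧸ φ.ker) ≤ Nat.card G := by
      have := Nat.card_congr (QuotientGroup.quotientKerEquivRange φ).toEquiv
      rw [this]
      exact Nat.card_le_card_of_injective _ Subtype.val_injective
    have hGpos : 0 < Nat.card G := Nat.card_pos
    have : Nat.card G ^ n ≤ Nat.card G * Nat.card φ.ker := by
      rw [← hfun, htot]
      exact Nat.mul_le_mul_right _ hq
    have hpow : Nat.card G * Nat.card G ^ (n - 1) = Nat.card G ^ n := by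
      rw [← pow_succ']
      congr 1
      omega
    rw [← hpow] at this
    exact Nat.le_of_mul_le_mul_left this hGpos
end

section
/- Let p be a prime, m a natural number, and let w = x_1^(α_1) · x_2^(α_2) ⋯ x_n^(α_n) be an element of the free group F_n on generators x_1,...,x_n, where α_1,...,α_n are integers. Then for any finite p-group G of nilpotency class at most 2 whose exponent divides p^m, there exist a natural number l, integers β_{ij} for 1 < i < j ≤ n, and integers γ_i for 2 ≤ i ≤ n, such that w is G-equivalent to the word v = x_1^(p^l) · (∏_{1 < i < j ≤ n} [x_i, x_j]^(β_{ij})) · (∏_{i=2}^{n} [x_1, x_i]^(γ_i)) in F_n, where [x,y] = x⁻¹y⁻¹xy. -/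
namespace PW

variable {G : Type*} [Group G]

def cmt (a b : G) : G := a⁻¹ * b⁻¹ * a * b

theorem mul_rearrange (x y : G) : x * y = y * x * cmt x y := by
  simp only [cmt]; group

theorem cmt_swap (a b : G) : cmt b a = (cmt a b)⁻¹ := by simp only [cmt]; group

theorem cmt_self (a : G) : cmt a a = 1 := by simp only [cmt]; group

theorem cmt_comm (hz : ∀ a b : G, cmt a b ∈ Subgroup.center G) (a b x : G) :
    x * cmt a b = cmt a b * x :=
  (Subgroup.mem_center_iff.mp (hz a b) x)

theorem conj_cmt (hz : ∀ a b : G, cmt a b ∈ Subgroup.center G) (a b c : G) :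
    c⁻¹ * cmt a b * c = cmt a b := by
  rw [mul_assoc, ← cmt_comm hz a b c, ← mul_assoc, inv_mul_cancel, one_mul]

theorem cmt_mul_right (hz : ∀ a b : G, cmt a b ∈ Subgroup.center G) (a b c : G) :
    cmt a (b * c) = cmt a b * cmt a c := by
  have h : cmt a (b * c) = cmt a c * (c⁻¹ * cmt a b * c) := by simp only [cmt]; group
  rw [h, conj_cmt hz, ← cmt_comm hz]

theorem cmt_mul_left (hz : ∀ a b : G, cmt a b ∈ Subgroup.center G) (a b c : G) :
    cmt (a * b) c = cmt a c * cmt b c := by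
  have h : cmt (a * b) c = (b⁻¹ * cmt a c * b) * cmt b c := by simp only [cmt]; group
  rw [h, conj_cmt hz]

theorem cmt_zpow_right (hz : ∀ a b : G, cmt a b ∈ Subgroup.center G) (a b : G) (k : ℤ) :
    cmt a (b ^ k) = cmt a b ^ k := by
  have h1 : cmt a 1 = 1 := by simp only [cmt]; group
  let φ : G →* G := MonoidHom.mk' (fun x => cmt a x) (fun b c => cmt_mul_right hz a b c)
  exact map_zpow φ b k

theorem cmt_zpow_left (hz : ∀ a b : G, cmt a b ∈ Subgroup.center G) (a b : G) (k : ℤ) :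
    cmt (a ^ k) b = cmt a b ^ k := by
  let φ : G →* G := MonoidHom.mk' (fun x => cmt x b) (fun c d => cmt_mul_left hz c d b)
  exact map_zpow φ a k

theorem cmt_zpow_zpow (hz : ∀ a b : G, cmt a b ∈ Subgroup.center G) (a b : G) (j k : ℤ) :
    cmt (a ^ j) (b ^ k) = cmt a b ^ (j * k) := by
  rw [cmt_zpow_left hz, cmt_zpow_right hz, ← zpow_mul, mul_comm]




variable {n : ℕ}

/-- the commutator-word function -/
def Tf (hn : 0 < n) (β : Fin n → Fin n → ℤ) (γ : Fin n → ℤ) (g : Fin n → G) : G :=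
  ((List.finRange n).map (fun (i : Fin n) =>
      ((List.finRange n).map (fun (j : Fin n) =>
        if 0 < (i : ℕ) ∧ (i : ℕ) < (j : ℕ) then cmt (g i) (g j) ^ β i j else 1)).prod)).prod *
  ((List.finRange n).map (fun (i : Fin n) =>
      if 0 < (i : ℕ) then cmt (g ⟨0, hn⟩) (g i) ^ γ i else 1)).prod

theorem ite_zpow_mem_center (hz : ∀ a b : G, cmt a b ∈ Subgroup.center G)
    (c : Prop) [Decidable c] (a b : G) (e : ℤ) :
    (if c then cmt a b ^ e else 1) ∈ Subgroup.center G := by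
  split_ifs
  · exact Subgroup.zpow_mem _ (hz a b) e
  · exact Subgroup.one_mem _

theorem Tf_mem_center (hz : ∀ a b : G, cmt a b ∈ Subgroup.center G) (hn : 0 < n)
    (β : Fin n → Fin n → ℤ) (γ : Fin n → ℤ) (g : Fin n → G) :
    Tf hn β γ g ∈ Subgroup.center G := by
  refine Subgroup.mul_mem _ ?_ ?_
  · refine Subgroup.list_prod_mem _ ?_
    intro x hx
    obtain ⟨i, -, rfl⟩ := List.mem_map.mp hx
    refine Subgroup.list_prod_mem _ ?_
    intro y hy
    obtain ⟨j, -, rfl⟩ := List.mem_map.mp hy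
    exact ite_zpow_mem_center hz _ _ _ _
  · refine Subgroup.list_prod_mem _ ?_
    intro x hx
    obtain ⟨i, -, rfl⟩ := List.mem_map.mp hx
    exact ite_zpow_mem_center hz _ _ _ _

theorem Tf_zero (hn : 0 < n) (g : Fin n → G) : Tf hn 0 0 g = 1 := by
  simp [Tf]

theorem prod_map_mul_central {ι : Type*} {L : List ι} {f f' : ι → G}
    (h : ∀ i ∈ L, f' i ∈ Subgroup.center G) :
    (L.map f).prod * (L.map f').prod = (L.map (fun i => f i * f' i)).prod := by
  induction L with
  | nil => simp
  | cons a L ih =>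
    simp only [List.map_cons, List.prod_cons]
    have hc := Subgroup.mem_center_iff.mp (h a (List.mem_cons_self))
    rw [mul_assoc, ← mul_assoc ((List.map f L).prod) (f' a), hc,
      mul_assoc, ih (fun i hi => h i (List.mem_cons_of_mem a hi)), ← mul_assoc]

theorem Tf_mul (hz : ∀ a b : G, cmt a b ∈ Subgroup.center G) (hn : 0 < n)
    (β β' : Fin n → Fin n → ℤ) (γ γ' : Fin n → ℤ) (g : Fin n → G) :
    Tf hn β γ g * Tf hn β' γ' g = Tf hn (β + β') (γ + γ') g := by
  unfold Tf
  set A := ((List.finRange n).map (fun (i : Fin n) =>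
      ((List.finRange n).map (fun (j : Fin n) =>
        if 0 < (i : ℕ) ∧ (i : ℕ) < (j : ℕ) then cmt (g i) (g j) ^ β i j else 1)).prod)).prod
  set B := ((List.finRange n).map (fun (i : Fin n) =>
      if 0 < (i : ℕ) then cmt (g ⟨0, hn⟩) (g i) ^ γ i else 1)).prod with hB
  set A' := ((List.finRange n).map (fun (i : Fin n) =>
      ((List.finRange n).map (fun (j : Fin n) =>
        if 0 < (i : ℕ) ∧ (i : ℕ) < (j : ℕ) then cmt (g i) (g j) ^ β' i j else 1)).prod)).prod
  set B' := ((List.finRange n).map (fun (i : Fin n) =>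
      if 0 < (i : ℕ) then cmt (g ⟨0, hn⟩) (g i) ^ γ' i else 1)).prod with hB'
  have hBc : B ∈ Subgroup.center G := by
    rw [hB]
    exact Subgroup.list_prod_mem _ (fun x hx => by
      obtain ⟨i, -, rfl⟩ := List.mem_map.mp hx
      exact ite_zpow_mem_center hz _ _ _ _)
  have step : A * B * (A' * B') = (A * A') * (B * B') := by
    have := Subgroup.mem_center_iff.mp hBc A'
    rw [mul_assoc, ← mul_assoc B A' B', ← this, mul_assoc A' B B', ← mul_assoc]
  rw [step]
  congr 1
  · rw [prod_map_mul_central (fun i _ => Subgroup.list_prod_mem _ (fun x hx => by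
      obtain ⟨j, -, rfl⟩ := List.mem_map.mp hx
      exact ite_zpow_mem_center hz _ _ _ _))]
    refine congrArg List.prod (List.map_congr_left ?_)
    intro i _
    rw [prod_map_mul_central (fun j _ => ite_zpow_mem_center hz _ _ _ _)]
    refine congrArg List.prod (List.map_congr_left ?_)
    intro j _
    split_ifs
    · rw [← zpow_add]; rfl
    · simp
  · rw [prod_map_mul_central (fun i _ => ite_zpow_mem_center hz _ _ _ _)]
    refine congrArg List.prod (List.map_congr_left ?_)
    intro i _
    split_ifs
    · rw [← zpow_add]; rfl
    · simp


section calc2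

variable (hn : 0 < n)

def Pm (a : Fin n → ℤ) (g : Fin n → G) : G :=
  ((List.finRange n).map (fun i => g i ^ a i)).prod

def Req (hn : 0 < n) (f h : (Fin n → G) → G) : Prop :=
  ∃ β γ, ∀ g, f g = h g * Tf hn β γ g

theorem Req_of_eq {f h : (Fin n → G) → G} (he : ∀ g, f g = h g) : Req hn f h :=
  ⟨0, 0, fun g => by rw [Tf_zero, mul_one]; exact he g⟩

theorem Req_refl (f : (Fin n → G) → G) : Req hn f f := Req_of_eq hn (fun _ => rfl)

theorem Req_trans (hz : ∀ a b : G, cmt a b ∈ Subgroup.center G) {f h k : (Fin n → G) → G} (h1 : Req hn f h) (h2 : Req hn h k) :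
    Req hn f k := by
  obtain ⟨β1, γ1, e1⟩ := h1
  obtain ⟨β2, γ2, e2⟩ := h2
  exact ⟨β2 + β1, γ2 + γ1, fun g => by rw [e1 g, e2 g, mul_assoc, Tf_mul hz]⟩

theorem Req_symm (hz : ∀ a b : G, cmt a b ∈ Subgroup.center G) {f h : (Fin n → G) → G} (h1 : Req hn f h) : Req hn h f := by
  obtain ⟨β, γ, e⟩ := h1
  refine ⟨-β, -γ, fun g => ?_⟩
  rw [e g, mul_assoc, Tf_mul hz]
  simp [Tf_zero]

theorem Req_mul_congr (hz : ∀ a b : G, cmt a b ∈ Subgroup.center G) {f f' h h' : (Fin n → G) → G}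
    (h1 : Req hn f f') (h2 : Req hn h h') :
    Req hn (fun g => f g * h g) (fun g => f' g * h' g) := by
  obtain ⟨β1, γ1, e1⟩ := h1
  obtain ⟨β2, γ2, e2⟩ := h2
  refine ⟨β1 + β2, γ1 + γ2, fun g => ?_⟩
  have hc := Subgroup.mem_center_iff.mp (Tf_mem_center hz hn β1 γ1 g)
  calc f g * h g = f' g * Tf hn β1 γ1 g * (h' g * Tf hn β2 γ2 g) := by rw [e1, e2]
    _ = f' g * (Tf hn β1 γ1 g * h' g) * Tf hn β2 γ2 g := by
        rw [mul_assoc, mul_assoc, mul_assoc]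
    _ = f' g * (h' g * Tf hn β1 γ1 g) * Tf hn β2 γ2 g := by rw [← hc]
    _ = f' g * h' g * (Tf hn β1 γ1 g * Tf hn β2 γ2 g) := by
        rw [mul_assoc, mul_assoc, mul_assoc]
    _ = f' g * h' g * Tf hn (β1 + β2) (γ1 + γ2) g := by rw [Tf_mul hz]

theorem Tf_pow (hz : ∀ a b : G, cmt a b ∈ Subgroup.center G) (β γ) (g : Fin n → G) (N : ℕ) :
    Tf hn β γ g ^ N = Tf hn (N • β) (N • γ) g := by
  induction N with
  | zero => simp [Tf_zero]
  | succ N ih =>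
    rw [pow_succ, ih, Tf_mul hz, succ_nsmul, succ_nsmul]

theorem Req_pow_congr (hz : ∀ a b : G, cmt a b ∈ Subgroup.center G) {f h : (Fin n → G) → G} (h1 : Req hn f h) (N : ℕ) :
    Req hn (fun g => f g ^ N) (fun g => h g ^ N) := by
  obtain ⟨β, γ, e⟩ := h1
  refine ⟨N • β, N • γ, fun g => ?_⟩
  have hc : Commute (h g) (Tf hn β γ g) :=
    Subgroup.mem_center_iff.mp (Tf_mem_center hz hn β γ g) (h g)
  show f g ^ N = h g ^ N * Tf hn (N • β) (N • γ) g
  rw [e g, hc.mul_pow, Tf_pow hn hz]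

theorem Pm_congr {a b : Fin n → ℤ} (h : ∀ i, a i = b i) (g : Fin n → G) :
    Pm a g = Pm b g := by
  have : a = b := funext h
  rw [this]

theorem Pm_zero (g : Fin n → G) : Pm (0 : Fin n → ℤ) g = 1 := by simp [Pm]

theorem Pm_single (i : Fin n) (c : ℤ) (g : Fin n → G) :
    Pm (Pi.single i c) g = g i ^ c := by
  have h1 := List.prod_map_eq_pow_single (l := List.finRange n) i
    (fun j => g j ^ (Pi.single i c : Fin n → ℤ) j)
    (fun j hj _ => by simp [Pi.single_eq_of_ne hj])
  rw [Pm, h1, List.count_eq_one_of_mem (List.nodup_finRange n) (List.mem_finRange i)]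
  simp

theorem Tf_single_β {i j : Fin n} (hij : 0 < (i : ℕ) ∧ (i : ℕ) < (j : ℕ)) (e : ℤ)
    (g : Fin n → G) :
    Tf hn (Pi.single i (Pi.single j e)) 0 g = cmt (g i) (g j) ^ e := by
  rw [Tf]
  have hB : ((List.finRange n).map (fun (i' : Fin n) =>
      if 0 < (i' : ℕ) then cmt (g ⟨0, hn⟩) (g i') ^ (0 : Fin n → ℤ) i' else 1)).prod = 1 := by
    refine List.prod_eq_one (fun x hx => ?_)
    obtain ⟨i', -, rfl⟩ := List.mem_map.mp hx
    split_ifs <;> simp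
  rw [hB, mul_one]
  rw [List.prod_map_eq_pow_single i _ (fun i' hi' _ => by
    refine List.prod_eq_one (fun x hx => ?_)
    obtain ⟨j', -, rfl⟩ := List.mem_map.mp hx
    rw [Pi.single_eq_of_ne hi']
    split_ifs <;> simp),
    List.count_eq_one_of_mem (List.nodup_finRange n) (List.mem_finRange i), pow_one]
  rw [List.prod_map_eq_pow_single j _ (fun j' hj' _ => by
    rw [Pi.single_eq_same, Pi.single_eq_of_ne hj']
    split_ifs <;> simp),
    List.count_eq_one_of_mem (List.nodup_finRange n) (List.mem_finRange j), pow_one,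
    Pi.single_eq_same, Pi.single_eq_same, if_pos hij]

theorem Tf_single_γ {i : Fin n} (hi : 0 < (i : ℕ)) (e : ℤ) (g : Fin n → G) :
    Tf hn 0 (Pi.single i e) g = cmt (g ⟨0, hn⟩) (g i) ^ e := by
  rw [Tf]
  have hA : ((List.finRange n).map (fun (i' : Fin n) =>
      ((List.finRange n).map (fun (j' : Fin n) =>
        if 0 < (i' : ℕ) ∧ (i' : ℕ) < (j' : ℕ) then cmt (g i') (g j') ^ (0 : Fin n → Fin n → ℤ) i' j'
        else 1)).prod)).prod = 1 := by
    refine List.prod_eq_one (fun x hx => ?_)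
    obtain ⟨i', -, rfl⟩ := List.mem_map.mp hx
    refine List.prod_eq_one (fun y hy => ?_)
    obtain ⟨j', -, rfl⟩ := List.mem_map.mp hy
    split_ifs <;> simp
  rw [hA, one_mul]
  rw [List.prod_map_eq_pow_single i _ (fun i' hi' _ => by
    rw [Pi.single_eq_of_ne hi']
    split_ifs <;> simp),
    List.count_eq_one_of_mem (List.nodup_finRange n) (List.mem_finRange i), pow_one,
    Pi.single_eq_same, if_pos hi]

theorem cmt_single_T (i j : Fin n) (e : ℤ) :
    ∃ β γ, ∀ g : Fin n → G, cmt (g i) (g j) ^ e = Tf hn β γ g := by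
  have aux : ∀ (i j : Fin n) (e : ℤ), (i : ℕ) < (j : ℕ) →
      ∃ β γ, ∀ g : Fin n → G, cmt (g i) (g j) ^ e = Tf hn β γ g := by
    intro i j e hij
    rcases Nat.eq_zero_or_pos (i : ℕ) with h0 | h0
    · have hi : i = ⟨0, hn⟩ := Fin.ext h0
      refine ⟨0, Pi.single j e, fun g => ?_⟩
      rw [Tf_single_γ hn (h0 ▸ hij) e g, hi]
    · exact ⟨Pi.single i (Pi.single j e), 0, fun g =>
        (Tf_single_β hn ⟨h0, hij⟩ e g).symm⟩
  rcases lt_trichotomy (i : ℕ) (j : ℕ) with h | h | h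
  · exact aux i j e h
  · have : i = j := Fin.ext h
    subst this
    refine ⟨0, 0, fun g => ?_⟩
    rw [cmt_self, one_zpow, Tf_zero]
  · obtain ⟨β, γ, hb⟩ := aux j i (-e) h
    refine ⟨β, γ, fun g => ?_⟩
    rw [← hb g, cmt_swap, inv_zpow, ← zpow_neg]

theorem atom_swap (hz : ∀ a b : G, cmt a b ∈ Subgroup.center G) (i j : Fin n) (b c : ℤ) :
    Req hn (fun g : Fin n → G => g i ^ b * g j ^ c) (fun g => g j ^ c * g i ^ b) := by
  obtain ⟨β, γ, hb⟩ := cmt_single_T (G := G) hn i j (b * c)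
  refine ⟨β, γ, fun g => ?_⟩
  rw [← hb g, ← cmt_zpow_zpow hz, ← mul_rearrange]

end calc2
section calc3
variable (hn : 0 < n) (hz : ∀ a b : G, cmt a b ∈ Subgroup.center G)
include hz

theorem swapP (L : List (Fin n)) (a : Fin n → ℤ) (i : Fin n) (c : ℤ) :
    Req hn (fun g : Fin n → G => (L.map (fun j => g j ^ a j)).prod * g i ^ c)
      (fun g => g i ^ c * (L.map (fun j => g j ^ a j)).prod) := by
  induction L with
  | nil => exact Req_of_eq hn (fun g => by simp)
  | cons j L ih =>
    refine Req_trans hn hz (Req_of_eq hn (fun g => ?_)) (Req_trans hn hz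
      (Req_mul_congr hn hz (Req_refl hn (fun g => g j ^ a j)) ih)
      (Req_trans hn hz (Req_of_eq hn (fun g => ?_))
        (Req_trans hn hz (Req_mul_congr hn hz (atom_swap hn hz j i (a j) c)
          (Req_refl hn (fun g => (L.map (fun j' => g j' ^ a j')).prod)))
          (Req_of_eq hn (fun g => ?_)))))
    · show (g j ^ a j * (L.map (fun j' => g j' ^ a j')).prod) * g i ^ c
        = g j ^ a j * ((L.map (fun j' => g j' ^ a j')).prod * g i ^ c)
      rw [mul_assoc]
    · show g j ^ a j * (g i ^ c * (L.map (fun j' => g j' ^ a j')).prod)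
        = (g j ^ a j * g i ^ c) * (L.map (fun j' => g j' ^ a j')).prod
      rw [mul_assoc]
    · show (g i ^ c * g j ^ a j) * (L.map (fun j' => g j' ^ a j')).prod
        = g i ^ c * (g j ^ a j * (L.map (fun j' => g j' ^ a j')).prod)
      rw [mul_assoc]

theorem PmulP (L : List (Fin n)) (a b : Fin n → ℤ) :
    Req hn (fun g : Fin n → G =>
        (L.map (fun i => g i ^ a i)).prod * (L.map (fun i => g i ^ b i)).prod)
      (fun g => (L.map (fun i => g i ^ (a i + b i))).prod) := by
  induction L with
  | nil => exact Req_of_eq hn (fun g => by simp)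
  | cons i L ih =>
    simp only [List.map_cons, List.prod_cons]
    have s1 : Req hn (fun g : Fin n → G => (L.map (fun j => g j ^ a j)).prod * g i ^ b i)
        (fun g => g i ^ b i * (L.map (fun j => g j ^ a j)).prod) := swapP hn hz L a i (b i)
    have h2 : Req hn
        (fun g : Fin n → G => ((L.map (fun j => g j ^ a j)).prod * g i ^ b i) *
          (L.map (fun j => g j ^ b j)).prod)
        (fun g => (g i ^ b i * (L.map (fun j => g j ^ a j)).prod) *
          (L.map (fun j => g j ^ b j)).prod) :=
      Req_mul_congr hn hz s1 (Req_refl hn _)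
    have h3 : Req hn
        (fun g : Fin n → G => g i ^ a i * (L.map (fun j => g j ^ a j)).prod *
          (g i ^ b i * (L.map (fun j => g j ^ b j)).prod))
        (fun g => g i ^ a i * ((g i ^ b i * (L.map (fun j => g j ^ a j)).prod) *
          (L.map (fun j => g j ^ b j)).prod)) := by
      refine Req_trans hn hz (Req_of_eq hn (fun g => ?_))
        (Req_mul_congr hn hz (Req_refl hn (fun g => g i ^ a i)) h2)
      rw [mul_assoc, ← mul_assoc ((L.map (fun j => g j ^ a j)).prod)]
    have h4 : Req hn
        (fun g : Fin n → G => g i ^ a i * ((g i ^ b i * (L.map (fun j => g j ^ a j)).prod) *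
          (L.map (fun j => g j ^ b j)).prod))
        (fun g => g i ^ (a i + b i) * ((L.map (fun j => g j ^ a j)).prod *
          (L.map (fun j => g j ^ b j)).prod)) := by
      refine Req_of_eq hn (fun g => ?_)
      rw [← mul_assoc, ← mul_assoc, ← zpow_add, mul_assoc]
    have h5 : Req hn
        (fun g : Fin n → G => g i ^ (a i + b i) * ((L.map (fun j => g j ^ a j)).prod *
          (L.map (fun j => g j ^ b j)).prod))
        (fun g => g i ^ (a i + b i) * (L.map (fun j => g j ^ (a j + b j))).prod) :=
      Req_mul_congr hn hz (Req_refl hn _) ih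
    exact Req_trans hn hz h3 (Req_trans hn hz h4 h5)

theorem PpowP (N : ℕ) (a : Fin n → ℤ) :
    Req hn (fun g : Fin n → G => Pm a g ^ N) (Pm (fun i => (N : ℤ) * a i)) := by
  induction N with
  | zero => exact Req_of_eq hn (fun g => by simp [Pm])
  | succ N ih =>
    have h1 : Req hn (fun g : Fin n → G => Pm a g ^ N * Pm a g)
        (fun g => Pm (fun i => (N : ℤ) * a i) g * Pm a g) :=
      Req_mul_congr hn hz ih (Req_refl hn (Pm a))
    have h2 : Req hn (fun g : Fin n → G => Pm (fun i => (N : ℤ) * a i) g * Pm a g)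
        (fun g => ((List.finRange n).map (fun i => g i ^ ((N : ℤ) * a i + a i))).prod) :=
      PmulP hn hz (List.finRange n) _ a
    have h3 : Req hn
        (fun g : Fin n → G => ((List.finRange n).map (fun i => g i ^ ((N : ℤ) * a i + a i))).prod)
        (Pm (fun i => ((N + 1 : ℕ) : ℤ) * a i)) := by
      refine Req_of_eq hn (fun g => ?_)
      rw [Pm]
      refine congrArg List.prod (List.map_congr_left (fun i _ => ?_))
      congr 1
      push_cast
      ring
    refine Req_trans hn hz (Req_of_eq hn (fun g => ?_)) (Req_trans hn hz h1
      (Req_trans hn hz h2 h3))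
    show Pm a g ^ (N + 1) = Pm a g ^ N * Pm a g
    rw [pow_succ]

theorem prodP {ι : Type*} (L : List ι) (F : ι → (Fin n → G) → G) (A : ι → Fin n → ℤ)
    (h : ∀ j ∈ L, Req hn (F j) (Pm (A j))) :
    Req hn (fun g => (L.map (fun j => F j g)).prod)
      (Pm (fun k => (L.map (fun j => A j k)).sum)) := by
  induction L with
  | nil => exact Req_of_eq hn (fun g => by simp [Pm])
  | cons j L ih =>
    have h1 : Req hn (fun g : Fin n → G => F j g * (L.map (fun j' => F j' g)).prod)
        (fun g => Pm (A j) g * Pm (fun k => (L.map (fun j' => A j' k)).sum) g) :=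
      Req_mul_congr hn hz (h j (List.mem_cons_self))
        (ih (fun j' hj' => h j' (List.mem_cons_of_mem j hj')))
    have h2 : Req hn
        (fun g : Fin n → G => Pm (A j) g * Pm (fun k => (L.map (fun j' => A j' k)).sum) g)
        (fun g => ((List.finRange n).map
          (fun i => g i ^ (A j i + (L.map (fun j' => A j' i)).sum))).prod) :=
      PmulP hn hz (List.finRange n) (A j) _
    have h3 : Req hn
        (fun g : Fin n → G => ((List.finRange n).map
          (fun i => g i ^ (A j i + (L.map (fun j' => A j' i)).sum))).prod)
        (Pm (fun k => (((j :: L).map (fun j' => A j' k))).sum)) := by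
      refine Req_of_eq hn (fun g => ?_)
      rw [Pm]
      refine congrArg List.prod (List.map_congr_left (fun i _ => by simp))
    refine Req_trans hn hz (Req_of_eq hn (fun g => by simp)) (Req_trans hn hz h1
      (Req_trans hn hz h2 h3))

end calc3


theorem nt (p : ℕ) (hp : p.Prime) (m : ℕ) (a : ℤ) :
    ∃ (l : ℕ) (s s' : ℤ), l ≤ m ∧ ((p : ℤ) ^ m ∣ s * s' - 1) ∧
      ((p : ℤ) ^ m ∣ s * a - (p : ℤ) ^ l) := by
  have hppos : (0 : ℤ) < (p : ℤ) ^ m :=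
    pow_pos (by exact_mod_cast hp.pos) m
  by_cases hd : (p : ℤ) ^ m ∣ a
  · exact ⟨m, 1, 1, le_rfl, by simp, by simpa using dvd_sub hd dvd_rfl⟩
  · set r := a % (p : ℤ) ^ m with hr
    have hr0 : 0 ≤ r := Int.emod_nonneg a (ne_of_gt hppos)
    have hrlt : r < (p : ℤ) ^ m := Int.emod_lt_of_pos a hppos
    have hdvd_ar : (p : ℤ) ^ m ∣ a - r := Int.dvd_self_sub_emod
    have hrne : r ≠ 0 := by
      intro h
      exact hd (Int.dvd_of_emod_eq_zero h)
    set A := r.toNat with hA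
    have hAr : (A : ℤ) = r := Int.toNat_of_nonneg hr0
    have hAne : A ≠ 0 := by
      intro h
      apply hrne
      rw [← hAr, h, Nat.cast_zero]
    obtain ⟨k, u, hu, hAe⟩ := Nat.exists_eq_pow_mul_and_not_dvd hAne p hp.ne_one
    have hune : u ≠ 0 := by rintro rfl; simp at hAe; exact hAne hAe
    have hklt : k < m := by
      have h1 : p ^ k ≤ A := by
        calc p ^ k = p ^ k * 1 := (mul_one _).symm
        _ ≤ p ^ k * u := Nat.mul_le_mul_left _ (Nat.one_le_iff_ne_zero.mpr hune)
        _ = A := hAe.symm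
      have h2 : A < p ^ m := by
        have : (A : ℤ) < ((p : ℕ) : ℤ) ^ m := by rw [hAr]; exact_mod_cast hrlt
        exact_mod_cast this
      exact (Nat.pow_lt_pow_iff_right hp.one_lt).mp (lt_of_le_of_lt h1 h2)
    have hcop : Nat.Coprime u (p ^ m) :=
      ((hp.coprime_iff_not_dvd.mpr hu).pow_left m).symm
    obtain ⟨x, y, hxy⟩ := Nat.isCoprime_iff_coprime.mpr hcop
    refine ⟨k, x, (u : ℤ), le_of_lt hklt, ?_, ?_⟩
    · refine ⟨-y, ?_⟩
      have : (↑(p ^ m) : ℤ) = (p : ℤ) ^ m := by push_cast; ring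
      rw [← this]
      linarith [hxy]
    · have h2 : x * r - (p : ℤ) ^ k = (p : ℤ) ^ m * (-(p : ℤ) ^ k * y) := by
        have hru : r = (p : ℤ) ^ k * (u : ℤ) := by
          rw [← hAr, hAe]; push_cast; ring
        have hxu : (x * (u : ℤ) - 1) = -(y * ((p : ℕ) : ℤ) ^ m) := by
          have : (↑(p ^ m) : ℤ) = (p : ℤ) ^ m := by push_cast; ring
          rw [← this] at *
          linarith [hxy]
        calc x * r - (p : ℤ) ^ k = (p : ℤ) ^ k * (x * (u : ℤ) - 1) := by rw [hru]; ring
        _ = (p : ℤ) ^ k * (-(y * ((p : ℕ) : ℤ) ^ m)) := by rw [hxu]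
        _ = (p : ℤ) ^ m * (-(p : ℤ) ^ k * y) := by push_cast; ring
      have h3 : x * a - (p : ℤ) ^ k = x * (a - r) + (x * r - (p : ℤ) ^ k) := by ring
      rw [h3]
      exact dvd_add (Dvd.dvd.mul_left hdvd_ar x) ⟨-(p : ℤ) ^ k * y, h2⟩

theorem zpow_eq_of_dvd {G : Type*} [Group G] {p m : ℕ}
    (hexp : ∀ g : G, g ^ (p ^ m) = 1) {a b : ℤ} (h : (p : ℤ) ^ m ∣ a - b) (x : G) :
    x ^ a = x ^ b := by
  obtain ⟨c, hc⟩ := h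
  have : a = b + (p : ℤ) ^ m * c := by linarith
  rw [this, zpow_add, zpow_mul]
  have hx : x ^ ((p : ℤ) ^ m) = 1 := by
    have : ((p : ℤ) ^ m) = ((p ^ m : ℕ) : ℤ) := by push_cast; ring
    rw [this, zpow_natCast, hexp]
  rw [hx, one_zpow, mul_one]


section reidx
variable {G : Type*} [Group G] {n : ℕ} (hn : 0 < n)

theorem req_one_of_each (hz : ∀ a b : G, cmt a b ∈ Subgroup.center G)
    {ι : Type*} (L : List ι) (F : ι → (Fin n → G) → G)
    (h : ∀ j ∈ L, Req hn (F j) (fun _ => (1 : G))) :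
    Req hn (fun g => (L.map (fun j => F j g)).prod) (fun _ => (1 : G)) := by
  induction L with
  | nil => exact Req_of_eq hn (fun g => by simp)
  | cons j L ih =>
    have h1 : Req hn (fun g : Fin n → G => F j g * (L.map (fun j' => F j' g)).prod)
        (fun _ => (1 : G) * 1) :=
      Req_mul_congr hn hz (h j (List.mem_cons_self))
        (ih (fun j' hj' => h j' (List.mem_cons_of_mem j hj')))
    refine Req_trans hn hz (Req_of_eq hn (fun g => by simp))
      (Req_trans hn hz h1 (Req_of_eq hn (fun g => one_mul 1)))

theorem ite_cmt_req (hz : ∀ a b : G, cmt a b ∈ Subgroup.center G)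
    (c : Prop) [Decidable c] (i j : Fin n) (e : ℤ) :
    Req hn (fun g : Fin n → G => if c then cmt (g i) (g j) ^ e else 1)
      (fun _ => (1 : G)) := by
  by_cases hc : c
  · obtain ⟨β, γ, hb⟩ := cmt_single_T (G := G) hn i j e
    refine ⟨β, γ, fun g => ?_⟩
    show (if c then cmt (g i) (g j) ^ e else 1) = 1 * Tf hn β γ g
    rw [if_pos hc, one_mul, hb g]
  · refine Req_of_eq hn (fun g => ?_)
    show (if c then cmt (g i) (g j) ^ e else 1) = 1
    rw [if_neg hc]

theorem Tf_reindex (hz : ∀ a b : G, cmt a b ∈ Subgroup.center G)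
    (σ : Fin n → Fin n) (β : Fin n → Fin n → ℤ) (γ : Fin n → ℤ) :
    Req hn (fun g : Fin n → G => Tf hn β γ (fun k => g (σ k))) (fun _ => (1 : G)) := by
  have hA : Req hn (fun g : Fin n → G => ((List.finRange n).map (fun (i : Fin n) =>
      ((List.finRange n).map (fun (j : Fin n) =>
        if 0 < (i : ℕ) ∧ (i : ℕ) < (j : ℕ) then cmt (g (σ i)) (g (σ j)) ^ β i j
        else 1)).prod)).prod) (fun _ => (1 : G)) := by
    refine req_one_of_each hn hz (List.finRange n) _ (fun i _ => ?_)
    exact req_one_of_each hn hz (List.finRange n) _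
      (fun j _ => ite_cmt_req hn hz _ (σ i) (σ j) (β i j))
  have hB : Req hn (fun g : Fin n → G => ((List.finRange n).map (fun (i : Fin n) =>
      if 0 < (i : ℕ) then cmt (g (σ ⟨0, hn⟩)) (g (σ i)) ^ γ i else 1)).prod)
      (fun _ => (1 : G)) :=
    req_one_of_each hn hz (List.finRange n) _
      (fun i _ => ite_cmt_req hn hz _ (σ ⟨0, hn⟩) (σ i) (γ i))
  refine Req_trans hn hz (Req_trans hn hz (Req_of_eq hn (fun g => rfl))
    (Req_mul_congr hn hz hA hB)) (Req_of_eq hn (fun g => one_mul 1))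

end reidx

end PW

/-- Let `w = x₁^(α₁) ⋯ xₙ^(αₙ)` in the free group on `n` generators.
For any finite `p`-group `G` of nilpotency class at most 2 with exponent dividing
`p^m`, there exist `l : ℕ`, integers `β i j` (for `1 < i < j ≤ n`) and `γ i`
(for `2 ≤ i ≤ n`) such that `w` is `G`-equivalent to
`v = x₁^(p^l) * (∏_{1<i<j} [xᵢ,xⱼ]^(β i j)) * (∏_{i≥2} [x₁,xᵢ]^(γ i))`,
where `[x,y] = x⁻¹y⁻¹xy`.  (Indices are 0-based: `x₁` is `FreeGroup.of ⟨0, hn⟩`.) -/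
theorem power_word_G_equivalent {p : ℕ} [Fact p.Prime] (m : ℕ)
    {n : ℕ} (hn : 0 < n) (α : Fin n → ℤ)
    {G : Type*} [Group G] [Finite G] (hG : IsPGroup p G)
    (h2 : commutator G ≤ Subgroup.center G)
    (hexp : ∀ g : G, g ^ (p ^ m) = 1) :
    ∃ (l : ℕ) (β : Fin n → Fin n → ℤ) (γ : Fin n → ℤ),
      ∀ c : G,
        Nat.card {g : Fin n → G // (FreeGroup.lift g)
          (((List.finRange n).map (fun (i : Fin n) => FreeGroup.of i ^ α i)).prod) = c} =
        Nat.card {g : Fin n → G // (FreeGroup.lift g)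
          (FreeGroup.of (⟨0, hn⟩ : Fin n) ^ (p ^ l) *
            ((List.finRange n).map (fun (i : Fin n) =>
              ((List.finRange n).map (fun (j : Fin n) =>
                if 0 < (i : ℕ) ∧ (i : ℕ) < (j : ℕ) then
                  ((FreeGroup.of i)⁻¹ * (FreeGroup.of j)⁻¹ *
                    FreeGroup.of i * FreeGroup.of j) ^ (β i j)
                else 1)).prod)).prod *
            ((List.finRange n).map (fun (i : Fin n) =>
              if 0 < (i : ℕ) then
                ((FreeGroup.of (⟨0, hn⟩ : Fin n))⁻¹ * (FreeGroup.of i)⁻¹ *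
                  FreeGroup.of (⟨0, hn⟩ : Fin n) * FreeGroup.of i) ^ (γ i)
              else 1)).prod) = c} := by
  classical
  have hp : p.Prime := Fact.out
  have hz : ∀ a b : G, PW.cmt a b ∈ Subgroup.center G := by
    intro a b
    apply h2
    have hc : PW.cmt a b = commutatorElement.bracket a⁻¹ b⁻¹ := by
      rw [commutatorElement_def]; simp [PW.cmt]
    rw [hc, commutator_def]
    exact Subgroup.commutator_mem_commutator (Subgroup.mem_top _) (Subgroup.mem_top _)
  choose l s s' hlm hss hsa using fun i : Fin n => PW.nt p hp m (α i)
  have e1li : ∀ (i : Fin n) (x : G), (x ^ s i) ^ s' i = x := by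
    intro i x
    rw [← zpow_mul, PW.zpow_eq_of_dvd hexp (hss i) x, zpow_one]
  have e1ri : ∀ (i : Fin n) (x : G), (x ^ s' i) ^ s i = x := by
    intro i x
    rw [← zpow_mul, mul_comm, PW.zpow_eq_of_dvd hexp (hss i) x, zpow_one]
  let Φ₁ : (Fin n → G) ≃ (Fin n → G) :=
    { toFun := fun g i => g i ^ s i
      invFun := fun g i => g i ^ s' i
      left_inv := fun g => funext fun i => e1li i (g i)
      right_inv := fun g => funext fun i => e1ri i (g i) }
  set lp : Fin n → ℤ := fun i => (p : ℤ) ^ l i with hlp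
  have hstep0 : ∀ g : Fin n → G, PW.Pm α (Φ₁ g) = PW.Pm lp g := by
    intro g
    rw [PW.Pm, PW.Pm]
    refine congrArg List.prod (List.map_congr_left fun i _ => ?_)
    show (g i ^ s i) ^ α i = g i ^ lp i
    rw [← zpow_mul]
    exact PW.zpow_eq_of_dvd hexp (hsa i) (g i)
  obtain ⟨i₀, -, hmin⟩ := Finset.exists_min_image Finset.univ l ⟨⟨0, hn⟩, Finset.mem_univ _⟩
  set N : ℕ := p ^ l i₀ with hN
  have hNlp : ((N : ℕ) : ℤ) = lp i₀ := by rw [hN, hlp]; push_cast; ring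
  set t : Fin n → ℤ := fun i => if i = i₀ then 0 else -((p : ℤ) ^ (l i - l i₀)) with ht
  have ht0 : t i₀ = 0 := by rw [ht]; simp
  have hQup : ∀ (g : Fin n → G) (x : G), PW.Pm t (Function.update g i₀ x) = PW.Pm t g := by
    intro g x
    rw [PW.Pm, PW.Pm]
    refine congrArg List.prod (List.map_congr_left fun i _ => ?_)
    by_cases hii : i = i₀
    · subst hii; rw [ht0]; simp
    · rw [Function.update_of_ne hii]
  let Φ₂ : (Fin n → G) ≃ (Fin n → G) :=
    { toFun := fun g => Function.update g i₀ (g i₀ * PW.Pm t g)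
      invFun := fun h => Function.update h i₀ (h i₀ * (PW.Pm t h)⁻¹)
      left_inv := by
        intro g
        funext k
        by_cases hk : k = i₀
        · subst hk
          simp only [Function.update_self, hQup, mul_inv_cancel_right]
        · simp only [Function.update_of_ne hk]
      right_inv := by
        intro h
        funext k
        by_cases hk : k = i₀
        · subst hk
          simp only [Function.update_self, hQup, inv_mul_cancel_right]
        · simp only [Function.update_of_ne hk] }
  -- the core Req computation
  have hmon : PW.Req hn (fun g : Fin n → G => g i₀ * PW.Pm t g)
      (PW.Pm (fun k => (Pi.single i₀ (1 : ℤ) : Fin n → ℤ) k + t k)) := by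
    refine PW.Req_trans hn hz (PW.Req_of_eq hn (fun g => ?_))
      (PW.PmulP hn hz (List.finRange n) (Pi.single i₀ (1 : ℤ)) t)
    show g i₀ * PW.Pm t g = PW.Pm (Pi.single i₀ (1 : ℤ)) g * PW.Pm t g
    rw [PW.Pm_single, zpow_one]
  have hpow : PW.Req hn (fun g : Fin n → G => (g i₀ * PW.Pm t g) ^ N)
      (PW.Pm (fun k => (N : ℤ) * ((Pi.single i₀ (1 : ℤ) : Fin n → ℤ) k + t k))) :=
    PW.Req_trans hn hz (PW.Req_pow_congr hn hz hmon N) (PW.PpowP hn hz N _)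
  set A : Fin n → Fin n → ℤ := fun j =>
    if j = i₀ then (fun k => (N : ℤ) * ((Pi.single i₀ (1 : ℤ) : Fin n → ℤ) k + t k))
    else Pi.single j (lp j) with hA
  have hall : ∀ j ∈ List.finRange n,
      PW.Req hn (fun g : Fin n → G => Function.update g i₀ (g i₀ * PW.Pm t g) j ^ lp j)
        (PW.Pm (A j)) := by
    intro j _
    by_cases hj : j = i₀
    · subst hj
      rw [hA]
      simp only [if_pos rfl]
      refine PW.Req_trans hn hz (PW.Req_of_eq hn (fun g => ?_)) hpow
      show Function.update g j (g j * PW.Pm t g) j ^ lp j = (g j * PW.Pm t g) ^ N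
      rw [Function.update_self, ← hNlp, zpow_natCast]
    · rw [hA]
      simp only [if_neg hj]
      refine PW.Req_of_eq hn (fun g => ?_)
      show Function.update g i₀ (g i₀ * PW.Pm t g) j ^ lp j = PW.Pm (Pi.single j (lp j)) g
      rw [Function.update_of_ne hj, PW.Pm_single]
  have hprod := PW.prodP hn hz (List.finRange n)
    (fun j => fun g : Fin n → G => Function.update g i₀ (g i₀ * PW.Pm t g) j ^ lp j) A hall
  have hAsum : (fun k => ((List.finRange n).map (fun j => A j k)).sum)
      = (Pi.single i₀ (lp i₀) : Fin n → ℤ) := by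
    funext k
    set R : ℤ := (N : ℤ) * ((Pi.single i₀ (1 : ℤ) : Fin n → ℤ) k + t k)
      - (Pi.single i₀ (lp i₀) : Fin n → ℤ) k with hR
    have hsplit : ∀ j : Fin n, A j k
        = (Pi.single j (lp j) : Fin n → ℤ) k + (if j = i₀ then R else 0) := by
      intro j
      simp only [hA]
      by_cases hj : j = i₀
      · rw [if_pos hj, if_pos hj, hR, hj]
        show (N : ℤ) * ((Pi.single i₀ (1 : ℤ) : Fin n → ℤ) k + t k) = _
        ring
      · rw [if_neg hj, if_neg hj, add_zero]
    have hmapeq : ((List.finRange n).map (fun j => A j k)).sum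
        = ((List.finRange n).map (fun j =>
            (Pi.single j (lp j) : Fin n → ℤ) k + (if j = i₀ then R else 0))).sum := by
      exact congrArg List.sum (List.map_congr_left (fun j _ => hsplit j))
    rw [hmapeq, List.sum_map_add]
    have hs1 : ((List.finRange n).map (fun j => (Pi.single j (lp j) : Fin n → ℤ) k)).sum
        = lp k := by
      rw [List.sum_map_eq_nsmul_single k (fun j => (Pi.single j (lp j) : Fin n → ℤ) k)
        (fun j hj _ => Pi.single_eq_of_ne (Ne.symm hj) _),
        List.count_eq_one_of_mem (List.nodup_finRange n) (List.mem_finRange k)]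
      simp
    have hs2 : ((List.finRange n).map (fun j => if j = i₀ then R else 0)).sum = R := by
      rw [List.sum_map_eq_nsmul_single i₀ (fun j => if j = i₀ then R else 0)
        (fun j hj _ => if_neg hj),
        List.count_eq_one_of_mem (List.nodup_finRange n) (List.mem_finRange i₀)]
      simp
    rw [hs1, hs2, hR]
    by_cases hk : k = i₀
    · subst hk
      rw [Pi.single_eq_same, Pi.single_eq_same, ht0, ← hNlp]
      ring
    · rw [Pi.single_eq_of_ne hk, Pi.single_eq_of_ne hk]
      have htk : t k = -((p : ℤ) ^ (l k - l i₀)) := by rw [ht]; simp [hk]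
      have hNk : (N : ℤ) * (p : ℤ) ^ (l k - l i₀) = lp k := by
        show ((p ^ l i₀ : ℕ) : ℤ) * (p : ℤ) ^ (l k - l i₀) = (p : ℤ) ^ l k
        push_cast
        rw [← pow_add, Nat.add_sub_cancel' (hmin k (Finset.mem_univ k))]
      rw [htk]
      linear_combination -hNk
  obtain ⟨β₁, γ₁, hb1⟩ := hprod
  have hstep1 : ∀ g : Fin n → G, PW.Pm lp (Φ₂ g) = g i₀ ^ lp i₀ * PW.Tf hn β₁ γ₁ g := by
    intro g
    have h1 := hb1 g
    rw [hAsum] at h1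
    calc PW.Pm lp (Φ₂ g)
        = ((List.finRange n).map
            (fun j => Function.update g i₀ (g i₀ * PW.Pm t g) j ^ lp j)).prod := rfl
      _ = PW.Pm (Pi.single i₀ (lp i₀)) g * PW.Tf hn β₁ γ₁ g := h1
      _ = g i₀ ^ lp i₀ * PW.Tf hn β₁ γ₁ g := by rw [PW.Pm_single]
  -- the swap
  set σ : Equiv.Perm (Fin n) := Equiv.swap (⟨0, hn⟩ : Fin n) i₀ with hσ
  let Φ₃ : (Fin n → G) ≃ (Fin n → G) :=
    { toFun := fun g => fun k => g (σ k)
      invFun := fun g => fun k => g (σ k)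
      left_inv := by
        intro g; funext k
        show g (σ (σ k)) = g k
        rw [hσ, Equiv.swap_apply_self]
      right_inv := by
        intro g; funext k
        show g (σ (σ k)) = g k
        rw [hσ, Equiv.swap_apply_self] }
  obtain ⟨β₂, γ₂, hb2⟩ := PW.Tf_reindex hn hz σ β₁ γ₁
  have hb2' : ∀ g : Fin n → G, PW.Tf hn β₁ γ₁ (fun k => g (σ k)) = PW.Tf hn β₂ γ₂ g := by
    intro g
    have := hb2 g
    rwa [one_mul] at this
  let Φ : (Fin n → G) ≃ (Fin n → G) := Φ₃.trans (Φ₂.trans Φ₁)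
  have hfinal : ∀ g : Fin n → G,
      PW.Pm α (Φ g) = g ⟨0, hn⟩ ^ (N : ℕ) * PW.Tf hn β₂ γ₂ g := by
    intro g
    calc PW.Pm α (Φ g) = PW.Pm α (Φ₁ (Φ₂ (Φ₃ g))) := rfl
      _ = PW.Pm lp (Φ₂ (Φ₃ g)) := hstep0 _
      _ = (Φ₃ g) i₀ ^ lp i₀ * PW.Tf hn β₁ γ₁ (Φ₃ g) := hstep1 _
      _ = g ⟨0, hn⟩ ^ (N : ℕ) * PW.Tf hn β₂ γ₂ g := by
          have h3 : (Φ₃ g) i₀ = g ⟨0, hn⟩ := by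
            show g (σ i₀) = g ⟨0, hn⟩
            rw [hσ, Equiv.swap_apply_right]
          rw [h3]
          show g ⟨0, hn⟩ ^ lp i₀ * PW.Tf hn β₁ γ₁ (fun k => g (σ k))
            = g ⟨0, hn⟩ ^ (N : ℕ) * PW.Tf hn β₂ γ₂ g
          rw [hb2' g, ← hNlp, zpow_natCast]
  -- evaluation lemmas
  have hevalW : ∀ g : Fin n → G, (FreeGroup.lift g)
      (((List.finRange n).map (fun (i : Fin n) => FreeGroup.of i ^ α i)).prod)
      = PW.Pm α g := by
    intro g
    rw [map_list_prod, List.map_map, PW.Pm]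
    refine congrArg List.prod (List.map_congr_left fun i _ => ?_)
    simp [Function.comp]
  refine ⟨l i₀, β₂, γ₂, fun c => ?_⟩
  have hevalV : ∀ g : Fin n → G, (FreeGroup.lift g)
      (FreeGroup.of (⟨0, hn⟩ : Fin n) ^ (p ^ l i₀) *
        ((List.finRange n).map (fun (i : Fin n) =>
          ((List.finRange n).map (fun (j : Fin n) =>
            if 0 < (i : ℕ) ∧ (i : ℕ) < (j : ℕ) then
              ((FreeGroup.of i)⁻¹ * (FreeGroup.of j)⁻¹ *
                FreeGroup.of i * FreeGroup.of j) ^ (β₂ i j)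
            else 1)).prod)).prod *
        ((List.finRange n).map (fun (i : Fin n) =>
          if 0 < (i : ℕ) then
            ((FreeGroup.of (⟨0, hn⟩ : Fin n))⁻¹ * (FreeGroup.of i)⁻¹ *
              FreeGroup.of (⟨0, hn⟩ : Fin n) * FreeGroup.of i) ^ (γ₂ i)
          else 1)).prod)
      = g ⟨0, hn⟩ ^ (N : ℕ) * PW.Tf hn β₂ γ₂ g := by
    intro g
    rw [map_mul, map_mul, map_pow, FreeGroup.lift_apply_of, PW.Tf, ← mul_assoc]
    congr 1
    · congr 1
      rw [map_list_prod, List.map_map]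
      refine congrArg List.prod (List.map_congr_left fun i _ => ?_)
      show (FreeGroup.lift g) _ = _
      rw [map_list_prod, List.map_map]
      refine congrArg List.prod (List.map_congr_left fun j _ => ?_)
      show (FreeGroup.lift g) _ = _
      rw [apply_ite (FreeGroup.lift g), map_one, map_zpow]
      simp only [map_mul, map_inv, FreeGroup.lift_apply_of]
      rfl
    · rw [map_list_prod, List.map_map]
      refine congrArg List.prod (List.map_congr_left fun i _ => ?_)
      show (FreeGroup.lift g) _ = _
      rw [apply_ite (FreeGroup.lift g), map_one, map_zpow]
      simp only [map_mul, map_inv, FreeGroup.lift_apply_of]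
      rfl
  refine (Nat.card_congr (Equiv.subtypeEquiv Φ (fun g => ?_))).symm
  rw [hevalV g, hevalW (Φ g), hfinal g]
end
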